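/- Let A_Γ be a T-algebra on Γ = 2^{<ω₁}, let r ∈ 2^{ω}, and let X_r = {x ∈ 2^{ω₁} : r ⊆ x}. For each x ∈ X_r let Y_x be the set ω₁ with the subspace topology inherited from (ω₁+1, τ(A_{Γ,x})), and for n ∈ ℕ let n̄ ∈ ∏_{x∈X_r} Y_x be the point with constant value n. Then the set {n̄ : n ∈ ℕ} has no accumulation point in the product space ∏_{x∈X_r} Y_x; in particular this product is not countably compact. -/

import Mathlib

open Set

noncomputable section

/-- The least uncountable ordinal `ω₁`. -/
def omega1 : Ordinal := (Cardinal.aleph 1).ord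

/-- `⋃_{γ ∈ F} a_γ` for a finite set `F` of indices. -/
def unionFin (a : Ordinal → Set ℕ) (F : Finset Ordinal) : Set ℕ :=
  ⋃ γ ∈ F, a γ

/-- A sequence of subsets of `ℕ`, with indices from a (downward closed) domain `D`
of ordinals, is coherent if for all `α ≤ β` in the domain there is a finite `F ⊆ α`
with `a α ∩ a β ⊆ ⋃_{γ∈F} a γ` or `a α ⊆ a β ∪ ⋃_{γ∈F} a γ`. -/
def CoherentOn (D : Set Ordinal) (a : Ordinal → Set ℕ) : Prop :=
  ∀ α β : Ordinal, α ≤ β → β ∈ D →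
    ∃ F : Finset Ordinal, (∀ γ ∈ F, γ < α) ∧
      (a α ∩ a β ⊆ unionFin a F ∨ a α ⊆ a β ∪ unionFin a F)

/-- Properness: no `a β` is contained in a finite union of earlier terms. -/
def ProperOn (D : Set Ordinal) (a : Ordinal → Set ℕ) : Prop :=
  ∀ β ∈ D, ∀ F : Finset Ordinal, (∀ γ ∈ F, γ < β) → ¬ a β ⊆ unionFin a F

/-- `â_β = { α ≤ β : a α ∖ a β ⊆ ⋃_{γ∈F} a γ for some finite F ⊆ α }`. -/
def hatA (a : Ordinal → Set ℕ) (β : Ordinal) : Set Ordinal :=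
  { α | α ≤ β ∧ ∃ F : Finset Ordinal, (∀ γ ∈ F, γ < α) ∧ a α \ a β ⊆ unionFin a F }

/-- The topology `τ(A)` on `λ + 1 = {α : α ≤ λ}` generated by the subbase
consisting of the sets `â_β` and their complements, `β < λ`. -/
def tau (lam : Ordinal) (a : Ordinal → Set ℕ) :
    TopologicalSpace {α : Ordinal // α ≤ lam} :=
  TopologicalSpace.generateFrom
    { s | ∃ β < lam, s = {x : {α : Ordinal // α ≤ lam} | x.1 ∈ hatA a β} ∨
                     s = {x : {α : Ordinal // α ≤ lam} | x.1 ∈ hatA a β}ᶜ }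

/-- The subspace `ω₁ = {α : α < ω₁}` of `(ω₁+1, τ(A))`. -/
def tauSub (a : Ordinal → Set ℕ) : TopologicalSpace {y : Ordinal // y < omega1} :=
  TopologicalSpace.induced
    (fun y : {y : Ordinal // y < omega1} => (⟨y.1, y.2.le⟩ : {α : Ordinal // α ≤ omega1}))
    (tau omega1 a)

/-- Closed unbounded subsets of `ω₁`. -/
def IsClubOmega1 (C : Set Ordinal) : Prop :=
  C ⊆ Iio omega1 ∧
  (∀ α < omega1, ∃ β ∈ C, α ≤ β) ∧
  (∀ δ, δ < omega1 → δ ≠ 0 → (∀ α < δ, ∃ β ∈ C, α < β ∧ β < δ) → δ ∈ C)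

/-- Stationary subsets of `ω₁`: sets meeting every club. -/
def IsStationaryOmega1 (S : Set Ordinal) : Prop :=
  ∀ C : Set Ordinal, IsClubOmega1 C → (S ∩ C).Nonempty

/-- The stationary covering property for a coherent sequence whose index domain is `D`:
if the sequence has length `ω₁` (i.e. `Iio ω₁ ⊆ D`), then every stationary `S ⊆ ω₁`
together with some finite `F` covers, i.e. `⋃_{γ ∈ S ∪ F} â_γ = ω₁`.  (Sequences of
length `< ω₁` have the ScP by convention.) -/
def HasScP (D : Set Ordinal) (a : Ordinal → Set ℕ) : Prop :=
  Iio omega1 ⊆ D →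
    ∀ S : Set Ordinal, S ⊆ Iio omega1 → IsStationaryOmega1 S →
      ∃ F : Finset Ordinal, (⋃ γ ∈ S ∪ (↑F : Set Ordinal), hatA a γ) = Iio omega1

/-- A node of the tree `2^{≤ω₁}`: a function `val` defined on the ordinals `< len`
(with the canonical value `false` beyond `len`). -/
structure Node where
  len : Ordinal
  val : Ordinal → Bool
  canon : ∀ α, len ≤ α → val α = false

open Classical in
/-- The restriction `x ↾ β`. -/
def Node.restrict (x : Node) (β : Ordinal) : Node where
  len := β
  val := fun α => if α < β then x.val α else false
  canon := fun α h => if_neg (not_lt.2 h)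

/-- `τ.Extends σ` means `σ ⊆ τ`, i.e. `τ` extends `σ`. -/
def Node.Extends (τ σ : Node) : Prop :=
  σ.len ≤ τ.len ∧ ∀ α < σ.len, τ.val α = σ.val α

/-- Successor ordinals. -/
def IsSucc (o : Ordinal) : Prop := ∃ β, o = β + 1

open Classical in
/-- `σ†`: if `σ` has successor length `β+1`, the node agreeing with `σ` except at `β`;
otherwise `σ` itself. -/
def Node.dagger (σ : Node) : Node :=
  if h : IsSucc σ.len then
    { len := σ.len
      val := fun α => if α = Classical.choose h then !(σ.val α) else σ.val α
      canon := by
        intro α hα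
        have hs := Classical.choose_spec h
        have hne : α ≠ Classical.choose h := by
          intro he
          rw [hs, he] at hα
          rw [Ordinal.add_one_eq_succ] at hα
          exact (not_le.2 (Order.lt_succ (Classical.choose h))) hα
        show (if α = Classical.choose h then !(σ.val α) else σ.val α) = false
        rw [if_neg hne]
        exact σ.canon α hα }
  else σ

open Classical in
/-- `σ ⌢ b` : the node `σ` extended by one value `b`. -/
def Node.snoc (σ : Node) (b : Bool) : Node where
  len := σ.len + 1
  val := fun α => if α = σ.len then b else σ.val α
  canon := by
    intro α hα
    have h1 : σ.len < α := by
      have h2 : σ.len < σ.len + 1 := by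
        rw [Ordinal.add_one_eq_succ]; exact Order.lt_succ σ.len
      exact lt_of_lt_of_le h2 hα
    show (if α = σ.len then b else σ.val α) = false
    rw [if_neg h1.ne']
    exact σ.canon α h1.le

open Classical in
/-- `x ⌢ σ` : concatenation of nodes. -/
def Node.append (x σ : Node) : Node where
  len := x.len + σ.len
  val := fun α => if α < x.len then x.val α else σ.val (α - x.len)
  canon := by
    intro α hα
    have h1 : ¬ α < x.len := not_lt.2 (le_trans (le_self_add : x.len ≤ x.len + σ.len) hα)
    show (if α < x.len then x.val α else σ.val (α - x.len)) = false
    rw [if_neg h1]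
    apply σ.canon
    by_contra h2
    rw [not_le] at h2
    have h3 : α ≤ x.len + (α - x.len) := Ordinal.le_add_sub α x.len
    have h4 : x.len + (α - x.len) < x.len + σ.len := (add_lt_add_iff_left x.len).2 h2
    exact absurd hα (not_le.2 (lt_of_le_of_lt h3 h4))

/-- A subtree of `2^{<ω₁}` that is downward closed, twinned and has no maximal elements. -/
structure GoodTree (Γ : Set Node) : Prop where
  lt_omega1 : ∀ σ ∈ Γ, σ.len < omega1
  downward : ∀ σ ∈ Γ, ∀ β ≤ σ.len, σ.restrict β ∈ Γ
  twinned : ∀ σ ∈ Γ, σ.dagger ∈ Γ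
  noMax : ∀ σ ∈ Γ, ∃ τ ∈ Γ, σ.len < τ.len ∧ τ.Extends σ

/-- `X(Γ)`: the maximal branches of `Γ`, i.e. the minimal elements of `2^{≤ω₁} ∖ Γ`. -/
def XGamma (Γ : Set Node) : Set Node :=
  { x | x.len ≤ omega1 ∧ x ∉ Γ ∧ ∀ β < x.len, x.restrict β ∈ Γ }

/-- The index domain of the branch sequence `A_{Γ,x}`. -/
def branchDomain (Γ : Set Node) (x : Node) : Set Ordinal :=
  { α | α + 1 ≤ x.len ∧ x.restrict (α + 1) ∈ Γ }

/-- The branch sequence `A_{Γ,x}`, `a^x_α = a_{x ↾ (α+1)}`. -/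
def branchSeq (a : Node → Set ℕ) (x : Node) : Ordinal → Set ℕ :=
  fun α => a (x.restrict (α + 1))

/-- A `𝕋`-algebra on the tree `Γ`. -/
structure IsTAlgebra (Γ : Set Node) (a : Node → Set ℕ) : Prop where
  tree : GoodTree Γ
  empty_of_not_succ : ∀ σ ∈ Γ, ¬ IsSucc σ.len → a σ = ∅
  compl_dagger : ∀ σ ∈ Γ, IsSucc σ.len → a σ.dagger = (a σ)ᶜ
  branch_coherent : ∀ x : Node, x.len ≤ omega1 →
    CoherentOn (branchDomain Γ x) (branchSeq a x)
  branch_proper : ∀ x : Node, x.len ≤ omega1 →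
    ProperOn (branchDomain Γ x) (branchSeq a x)

/-- The Boolean subalgebra of `P(ℕ)` generated by a family `G`. -/
inductive GenBool (G : Set (Set ℕ)) : Set ℕ → Prop
  | basic (s : Set ℕ) : s ∈ G → GenBool G s
  | empty : GenBool G ∅
  | compl (s : Set ℕ) : GenBool G s → GenBool G sᶜ
  | inter (s t : Set ℕ) : GenBool G s → GenBool G t → GenBool G (s ∩ t)

/-- `B_Γ`: the Boolean subalgebra of `P(ℕ)` generated by `{a_σ : σ ∈ Γ}`. -/
def BGamma (Γ : Set Node) (a : Node → Set ℕ) : Set (Set ℕ) :=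
  { b | GenBool { s | ∃ σ ∈ Γ, s = a σ } b }

/-- A finite intersection from the family `{ℕ ∖ a_{x↾(α+1)} : α + 1 ≤ λ_x}`. -/
def finInterCompl (a : Node → Set ℕ) (x : Node) (F : Finset Ordinal) : Set ℕ :=
  ⋂ α ∈ F, (a (x.restrict (α + 1)))ᶜ

/-- The ultrafilter `U_x` on `B_Γ` generated by the finite intersections of
`{ℕ ∖ a_{x↾(α+1)} : α + 1 ≤ λ_x}`. -/
def Ux (Γ : Set Node) (a : Node → Set ℕ) (x : Node) : Set (Set ℕ) :=
  { b | b ∈ BGamma Γ a ∧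
    ∃ F : Finset Ordinal, (∀ α ∈ F, α + 1 ≤ x.len) ∧ finInterCompl a x F ⊆ b }

/-- The Stone topology on `X(Γ)`, with subbasic open sets `{z : b ∈ U_z}`, `b ∈ B_Γ`. -/
def stoneTop (Γ : Set Node) (a : Node → Set ℕ) :
    TopologicalSpace {z : Node // z ∈ XGamma Γ} :=
  TopologicalSpace.generateFrom
    { s | ∃ b ∈ BGamma Γ a, s = { z : {z : Node // z ∈ XGamma Γ} | b ∈ Ux Γ a z.1 } }

/-- An ultrafilter on a Boolean subalgebra `B` of `P(ℕ)`. -/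
def IsUltrafilterOn (B U : Set (Set ℕ)) : Prop :=
  U ⊆ B ∧
  (∀ s ∈ U, ∀ t ∈ U, s ∩ t ∈ U) ∧
  (∀ s ∈ U, ∀ t ∈ B, s ⊆ t → t ∈ U) ∧
  ∅ ∉ U ∧
  (∀ b ∈ B, Xor' (b ∈ U) (bᶜ ∈ U))

/-- The length-lexicographic (strict) order on finite binary strings. -/
def LenLexLT (σ τ : Node) : Prop :=
  σ.len < τ.len ∨ (σ.len = τ.len ∧ ∃ i < σ.len, σ.val i = false ∧ τ.val i = true ∧
    ∀ j < i, σ.val j = τ.val j)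

/-- `e` is the standard length-lexicographic enumeration of `2^{<ω}`. -/
def IsStdEnum (e : ℕ → Node) : Prop :=
  (∀ k, (e k).len < Ordinal.omega0) ∧
  (∀ σ : Node, σ.len < Ordinal.omega0 → ∃ k, e k = σ) ∧
  (∀ k l : ℕ, k < l → LenLexLT (e k) (e l))

/-- `⋃_{k<n} c^x_k` where `c^x_n = a^x_{e(n)} ∖ ⋃_{k<n} c^x_k` (recursively). -/
def cUnion (a : Node → Set ℕ) (x : Node) (eb : ℕ → Ordinal) : ℕ → Set ℕ
  | 0 => ∅
  | n + 1 => cUnion a x eb n ∪ (a (x.restrict (eb n + 1)) \ cUnion a x eb n)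

/-- `c^x_n = a^x_{e(n)} ∖ ⋃_{k<n} c^x_k`. -/
def cSeq (a : Node → Set ℕ) (x : Node) (eb : ℕ → Ordinal) (n : ℕ) : Set ℕ :=
  a (x.restrict (eb n + 1)) \ cUnion a x eb n

/-- `{x ⌢ σ : σ ∈ 2^{<ω}}`. -/
def appendSet (x : Node) : Set Node :=
  { τ | ∃ σ : Node, σ.len < Ordinal.omega0 ∧ τ = x.append σ }

/-- The defining equations of the extension `A_Γ[π,x]`:
`a_x = ∅`, `a_{x⌢(σ⌢0)} = ⋃{c^x_k : σ⌢1 ⊆ σ_{π(k)}}`, `a_{x⌢(σ⌢1)} = ℕ ∖ a_{x⌢(σ⌢0)}`. -/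
def ExtEquations (e : ℕ → Node) (π : ℕ → ℕ) (a : Node → Set ℕ) (x : Node)
    (eb : ℕ → Ordinal) (a' : Node → Set ℕ) : Prop :=
  a' x = ∅ ∧
  ∀ σ : Node, σ.len < Ordinal.omega0 →
    (a' (x.append (σ.snoc false)) =
      ⋃ k ∈ { k : ℕ | (e (π k)).Extends (σ.snoc true) }, cSeq a x eb k) ∧
    (a' (x.append (σ.snoc true)) = (a' (x.append (σ.snoc false)))ᶜ)

/-- The full tree `2^{<ω₁}`. -/
def GammaFull : Set Node := { σ | σ.len < omega1 }

theorem natLtOmega1 (n : ℕ) : (n : Ordinal) < omega1 := by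
  have h1 : (n : Ordinal) < Ordinal.omega0 := Ordinal.nat_lt_omega0 n
  have h2 : Ordinal.omega0 < omega1 := by
    rw [omega1, ← Cardinal.ord_aleph0]
    exact Cardinal.ord_lt_ord.2 (by rw [← Cardinal.aleph_zero]
                                    exact Cardinal.aleph_lt_aleph.2 zero_lt_one)
  exact h1.trans h2


/-- Countable compactness via accumulation points of countably infinite subsets. -/
def CountablyCompactAcc (X : Type*) (t : TopologicalSpace X) : Prop :=
  ∀ D : Set X, D.Countable → D.Infinite →
    ∃ p : X, ∀ U : Set X, t.IsOpen U → p ∈ U → ∃ q ∈ D, q ≠ p ∧ q ∈ U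

/-! ### Auxiliary lemmas for `stmt17` -/

theorem omega0_lt_omega1 : Ordinal.omega0 < omega1 := by
  rw [omega1, ← Cardinal.ord_aleph0]
  exact Cardinal.ord_lt_ord.2 (by rw [← Cardinal.aleph_zero]
                                  exact Cardinal.aleph_lt_aleph.2 zero_lt_one)

theorem succ_lt_omega1 {δ : Ordinal} (h : δ < omega1) : δ + 1 < omega1 := by
  rw [Ordinal.add_one_eq_succ]
  exact (Cardinal.isSuccLimit_ord (Cardinal.aleph0_le_aleph 1)).succ_lt h

theorem Node.ext' {x y : Node} (hlen : x.len = y.len) (hval : ∀ γ, x.val γ = y.val γ) :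
    x = y := by
  cases x with
  | mk xl xv xc =>
    cases y with
    | mk yl yv yc =>
      dsimp at hlen hval
      subst hlen
      have : xv = yv := funext hval
      subst this
      rfl

theorem mem_hatA_self (b : Ordinal → Set ℕ) (β : Ordinal) : β ∈ hatA b β := by
  refine ⟨le_rfl, ∅, by simp, ?_⟩
  simp [unionFin]

theorem mem_unionFin {b : Ordinal → Set ℕ} {F : Finset Ordinal} {s : ℕ} :
    s ∈ unionFin b F ↔ ∃ γ ∈ F, s ∈ b γ := by
  simp [unionFin]

theorem restrict_eq_of_agree {x y : Node} {δ : Ordinal}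
    (h : ∀ γ < δ, x.val γ = y.val γ) {β : Ordinal} (hβ : β ≤ δ) :
    x.restrict β = y.restrict β := by
  apply Node.ext'
  · rfl
  intro γ
  show (if γ < β then x.val γ else false) = (if γ < β then y.val γ else false)
  split_ifs with hh
  · exact h γ (lt_of_lt_of_le hh hβ)
  · rfl

theorem lt_add_one_iff' {γ δ : Ordinal} : γ < δ + 1 ↔ γ ≤ δ := by
  rw [Ordinal.add_one_eq_succ]
  exact Order.lt_succ_iff

theorem add_one_le_iff' {γ δ : Ordinal} : γ + 1 ≤ δ ↔ γ < δ := by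
  rw [Ordinal.add_one_eq_succ]
  exact Order.succ_le_iff

theorem restrict_dagger {x y : Node} {δ : Ordinal}
    (hagree : ∀ γ < δ, x.val γ = y.val γ) (hd : x.val δ ≠ y.val δ) :
    y.restrict (δ + 1) = (x.restrict (δ + 1)).dagger := by
  have hsucc : IsSucc (x.restrict (δ + 1)).len := ⟨δ, rfl⟩
  rw [Node.dagger, dif_pos hsucc]
  have hc : Classical.choose hsucc = δ := by
    have hs : δ + 1 = Classical.choose hsucc + 1 := Classical.choose_spec hsucc
    have h2 := congrArg Ordinal.pred hs
    have e2 : ∀ c : Ordinal, (c + 1).pred = c := fun c => by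
      rw [Ordinal.add_one_eq_succ, Ordinal.pred_succ]
    exact ((e2 δ).symm.trans (h2.trans (e2 _))).symm
  apply Node.ext'
  · rfl
  intro γ
  show (if γ < δ + 1 then y.val γ else false)
      = (if γ = Classical.choose hsucc then !((x.restrict (δ + 1)).val γ)
         else (x.restrict (δ + 1)).val γ)
  rw [hc]
  by_cases hγδ : γ = δ
  · subst hγδ
    rw [if_pos rfl, if_pos (lt_add_one_iff'.2 le_rfl)]
    show y.val γ = !(if γ < γ + 1 then x.val γ else false)
    rw [if_pos (lt_add_one_iff'.2 le_rfl)]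
    cases hx : x.val γ <;> cases hy : y.val γ <;> simp_all
  · rw [if_neg hγδ]
    show (if γ < δ + 1 then y.val γ else false) = (if γ < δ + 1 then x.val γ else false)
    split_ifs with hh
    · exact (hagree γ (lt_of_le_of_ne (lt_add_one_iff'.1 hh) hγδ)).symm
    · rfl

theorem restrict_mem_GammaFull {x : Node} {β : Ordinal} (h : β < omega1) :
    x.restrict β ∈ GammaFull := h

/-- The key "twin coordinates" annihilation lemma: a natural number below `δ` cannot be
in the `δ`-th hat set of two branches that agree below `δ` and differ at `δ`. -/
theorem twin_kill (a : Node → Set ℕ) (hT : IsTAlgebra GammaFull a)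
    (x₀ x₁ : Node) (h₀ : x₀.len = omega1) (h₁ : x₁.len = omega1)
    (δ : Ordinal) (hδ : δ < omega1)
    (hagree : ∀ γ < δ, x₀.val γ = x₁.val γ) (hdiff : x₀.val δ ≠ x₁.val δ)
    (n : ℕ) (hn : (n : Ordinal) < δ)
    (hm0 : (n : Ordinal) ∈ hatA (branchSeq a x₀) δ)
    (hm1 : (n : Ordinal) ∈ hatA (branchSeq a x₁) δ) : False := by
  have eqn : ∀ α : Ordinal, α < δ → x₀.restrict (α + 1) = x₁.restrict (α + 1) := by
    intro α hα
    exact restrict_eq_of_agree hagree (add_one_le_iff'.2 hα)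
  have hcompl : branchSeq a x₁ δ = (branchSeq a x₀ δ)ᶜ := by
    show a (x₁.restrict (δ + 1)) = (a (x₀.restrict (δ + 1)))ᶜ
    rw [restrict_dagger hagree hdiff]
    exact hT.compl_dagger _ (restrict_mem_GammaFull (succ_lt_omega1 hδ)) ⟨δ, rfl⟩
  obtain ⟨-, F₀, hF₀, hsub₀⟩ := hm0
  obtain ⟨-, F₁, hF₁, hsub₁⟩ := hm1
  have hdom : (n : Ordinal) ∈ branchDomain GammaFull x₀ := by
    have hn1 : ((n : Ordinal) + 1) < omega1 := by
      have := natLtOmega1 (n + 1)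
      rwa [Nat.cast_add, Nat.cast_one] at this
    exact ⟨by rw [h₀]; exact hn1.le, restrict_mem_GammaFull hn1⟩
  apply hT.branch_proper x₀ h₀.le (n : Ordinal) hdom (F₀ ∪ F₁)
    (by
      intro γ hγ
      rcases Finset.mem_union.1 hγ with h | h
      · exact hF₀ γ h
      · exact hF₁ γ h)
  intro s hs
  by_cases hsδ : s ∈ branchSeq a x₀ δ
  · have hs1 : s ∈ branchSeq a x₁ (n : Ordinal) := by
      show s ∈ a (x₁.restrict ((n : Ordinal) + 1))
      rw [← eqn (n : Ordinal) hn]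
      exact hs
    have hs2 : s ∉ branchSeq a x₁ δ := by
      rw [hcompl]
      exact fun hmem => hmem hsδ
    have := hsub₁ ⟨hs1, hs2⟩
    rcases mem_unionFin.1 this with ⟨γ, hγF, hsγ⟩
    refine mem_unionFin.2 ⟨γ, Finset.mem_union_right _ hγF, ?_⟩
    show s ∈ a (x₀.restrict (γ + 1))
    rw [eqn γ ((hF₁ γ hγF).trans hn)]
    exact hsγ
  · have := hsub₀ ⟨hs, hsδ⟩
    rcases mem_unionFin.1 this with ⟨γ, hγF, hsγ⟩
    exact mem_unionFin.2 ⟨γ, Finset.mem_union_left _ hγF, hsγ⟩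

/-- A subbasic-hat preimage in the product is open. -/
theorem isOpen_hat_side {r : Node} (a : Node → Set ℕ)
    (x : {x : Node // x.len = omega1 ∧ x.Extends r}) {δ : Ordinal} (hδ : δ < omega1) :
    @IsOpen _ (@Pi.topologicalSpace {x : Node // x.len = omega1 ∧ x.Extends r}
        (fun _ => {y : Ordinal // y < omega1}) (fun x => tauSub (branchSeq a x.1)))
      {q : (x : {x : Node // x.len = omega1 ∧ x.Extends r}) → {y : Ordinal // y < omega1} |
        (q x).1 ∈ hatA (branchSeq a x.1) δ} := by
  letI tY : ∀ _z : {x : Node // x.len = omega1 ∧ x.Extends r},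
      TopologicalSpace {y : Ordinal // y < omega1} := fun z => tauSub (branchSeq a z.1)
  have hS : @IsOpen _ (tau omega1 (branchSeq a x.1))
      {z : {α : Ordinal // α ≤ omega1} | z.1 ∈ hatA (branchSeq a x.1) δ} :=
    TopologicalSpace.GenerateOpen.basic _ ⟨δ, hδ, Or.inl rfl⟩
  have hV : @IsOpen _ (tauSub (branchSeq a x.1))
      {y : {y : Ordinal // y < omega1} | y.1 ∈ hatA (branchSeq a x.1) δ} := ⟨_, hS, rfl⟩
  have hle : (@Pi.topologicalSpace {x : Node // x.len = omega1 ∧ x.Extends r}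
        (fun _ => {y : Ordinal // y < omega1}) (fun x => tauSub (branchSeq a x.1))) ≤
      TopologicalSpace.induced (fun q => q x) (tauSub (branchSeq a x.1)) :=
    iInf_le _ x
  exact (TopologicalSpace.le_def.1 hle) _ ⟨_, hV, rfl⟩

theorem isOpen_hat_side_compl {r : Node} (a : Node → Set ℕ)
    (x : {x : Node // x.len = omega1 ∧ x.Extends r}) {δ : Ordinal} (hδ : δ < omega1) :
    @IsOpen _ (@Pi.topologicalSpace {x : Node // x.len = omega1 ∧ x.Extends r}
        (fun _ => {y : Ordinal // y < omega1}) (fun x => tauSub (branchSeq a x.1)))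
      {q : (x : {x : Node // x.len = omega1 ∧ x.Extends r}) → {y : Ordinal // y < omega1} |
        (q x).1 ∉ hatA (branchSeq a x.1) δ} := by
  letI tY : ∀ _z : {x : Node // x.len = omega1 ∧ x.Extends r},
      TopologicalSpace {y : Ordinal // y < omega1} := fun z => tauSub (branchSeq a z.1)
  have hS : @IsOpen _ (tau omega1 (branchSeq a x.1))
      {z : {α : Ordinal // α ≤ omega1} | z.1 ∈ hatA (branchSeq a x.1) δ}ᶜ :=
    TopologicalSpace.GenerateOpen.basic _ ⟨δ, hδ, Or.inr rfl⟩
  have hV : @IsOpen _ (tauSub (branchSeq a x.1))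
      {y : {y : Ordinal // y < omega1} | y.1 ∉ hatA (branchSeq a x.1) δ} := ⟨_, hS, rfl⟩
  have hle : (@Pi.topologicalSpace {x : Node // x.len = omega1 ∧ x.Extends r}
        (fun _ => {y : Ordinal // y < omega1}) (fun x => tauSub (branchSeq a x.1))) ≤
      TopologicalSpace.induced (fun q => q x) (tauSub (branchSeq a x.1)) :=
    iInf_le _ x
  exact (TopologicalSpace.le_def.1 hle) _ ⟨_, hV, rfl⟩

/-- A length-`ω₁` branch with prescribed values. -/
def mkBranch (g : Ordinal → Bool) : Node where
  len := omega1
  val := fun γ => if γ < omega1 then g γ else false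
  canon := fun _α h => if_neg (not_lt.2 h)

theorem mkBranch_spec (r : Node) (hr : r.len = Ordinal.omega0) (g : Ordinal → Bool)
    (hg : ∀ γ, γ < Ordinal.omega0 → g γ = r.val γ) :
    (mkBranch g).len = omega1 ∧ (mkBranch g).Extends r := by
  refine ⟨rfl, ?_, ?_⟩
  · show r.len ≤ omega1
    rw [hr]; exact omega0_lt_omega1.le
  · intro α hα
    rw [hr] at hα
    show (if α < omega1 then g α else false) = r.val α
    rw [if_pos (hα.trans omega0_lt_omega1), hg α hα]

theorem mkBranch_val (g : Ordinal → Bool) {γ : Ordinal} (h : γ < omega1) :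
    (mkBranch g).val γ = g γ := by
  show (if γ < omega1 then g γ else false) = g γ
  rw [if_pos h]


/-- For a `𝕋`-algebra on `2^{<ω₁}` and `r ∈ 2^ω`, the set `{n̄ : n ∈ ℕ}` of constant
functions has no accumulation point in the product `∏_{x ∈ X_r} Y_x`; in particular
this product is not countably compact. -/
theorem stmt17 (a : Node → Set ℕ) (hT : IsTAlgebra GammaFull a)
    (r : Node) (hr : r.len = Ordinal.omega0) :
    (∀ p : (x : {x : Node // x.len = omega1 ∧ x.Extends r}) → {y : Ordinal // y < omega1},
      ∃ U : Set ((x : {x : Node // x.len = omega1 ∧ x.Extends r}) → {y : Ordinal // y < omega1}),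
        @IsOpen _ (@Pi.topologicalSpace _ _ (fun x => tauSub (branchSeq a x.1))) U ∧
        p ∈ U ∧
        ∀ n : ℕ,
          (fun _ => (⟨(n : Ordinal), natLtOmega1 n⟩ : {y : Ordinal // y < omega1})) ∈ U →
          (fun _ => (⟨(n : Ordinal), natLtOmega1 n⟩ : {y : Ordinal // y < omega1})) = p) ∧
    ¬ CountablyCompactAcc
        ((x : {x : Node // x.len = omega1 ∧ x.Extends r}) → {y : Ordinal // y < omega1})
        (@Pi.topologicalSpace _ _ (fun x => tauSub (branchSeq a x.1))) := by
  classical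
  have main : ∀ p : (x : {x : Node // x.len = omega1 ∧ x.Extends r}) → {y : Ordinal // y < omega1},
      ∃ U : Set ((x : {x : Node // x.len = omega1 ∧ x.Extends r}) → {y : Ordinal // y < omega1}),
        @IsOpen _ (@Pi.topologicalSpace _ _ (fun x => tauSub (branchSeq a x.1))) U ∧
        p ∈ U ∧
        ∀ n : ℕ,
          (fun _ => (⟨(n : Ordinal), natLtOmega1 n⟩ : {y : Ordinal // y < omega1})) ∈ U →
          (fun _ => (⟨(n : Ordinal), natLtOmega1 n⟩ : {y : Ordinal // y < omega1})) = p := by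
    intro p
    letI tY : ∀ _z : {x : Node // x.len = omega1 ∧ x.Extends r},
        TopologicalSpace {y : Ordinal // y < omega1} := fun z => tauSub (branchSeq a z.1)
    by_cases hsmall : ∃ x₀ : {x : Node // x.len = omega1 ∧ x.Extends r},
        (p x₀).1 < Ordinal.omega0
    · -- Case 1: some coordinate of `p` is a natural number.
      obtain ⟨x₀, hx₀⟩ := hsmall
      obtain ⟨m, hm⟩ := Ordinal.lt_omega0.1 hx₀
      have hK : ∀ n : ℕ,
          ∃ K : Set ((x : {x : Node // x.len = omega1 ∧ x.Extends r}) →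
              {y : Ordinal // y < omega1}),
            @IsOpen _ (@Pi.topologicalSpace _ _ (fun x => tauSub (branchSeq a x.1))) K ∧
            p ∈ K ∧
            ((fun _ => (⟨(n : Ordinal), natLtOmega1 n⟩ : {y : Ordinal // y < omega1})) ∈ K →
             (fun _ => (⟨(n : Ordinal), natLtOmega1 n⟩ : {y : Ordinal // y < omega1})) = p) := by
        intro n
        by_cases hc : (fun _ => (⟨(n : Ordinal), natLtOmega1 n⟩ :
            {y : Ordinal // y < omega1})) = p
        · exact ⟨Set.univ, isOpen_univ, Set.mem_univ _, fun _ => hc⟩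
        · obtain ⟨z, hz⟩ := Function.ne_iff.1 hc
          have hzn : (p z).1 ≠ (n : Ordinal) := by
            intro he
            exact hz (Subtype.ext he).symm
          rcases lt_or_gt_of_ne hzn with hlt | hgt
          · refine ⟨{q | (q z).1 ∈ hatA (branchSeq a z.1) ((p z).1)},
              isOpen_hat_side a z (p z).2, mem_hatA_self _ _, ?_⟩
            intro hmem
            exact absurd (hmem.1 : ((n : Ordinal)) ≤ (p z).1) (not_le.2 hlt)
          · refine ⟨{q | (q z).1 ∉ hatA (branchSeq a z.1) ((n : Ordinal))},
              isOpen_hat_side_compl a z (natLtOmega1 n), ?_, ?_⟩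
            · intro hmem
              exact absurd (hmem.1 : (p z).1 ≤ (n : Ordinal)) (not_le.2 hgt)
            · intro hmem
              exact absurd (mem_hatA_self (branchSeq a z.1) ((n : Ordinal))) hmem
      choose K hKopen hKp hKkill using hK
      refine ⟨{q | (q x₀).1 ∈ hatA (branchSeq a x₀.1) ((p x₀).1)} ∩
          ⋂ n ∈ Finset.range (m + 1), K n, ?_, ⟨mem_hatA_self _ _, ?_⟩, ?_⟩
      · exact (isOpen_hat_side a x₀ (p x₀).2).inter
          (isOpen_biInter_finset fun n _ => hKopen n)
      · exact Set.mem_biInter fun n _ => hKp n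
      · intro n hn
        have h1 : ((n : Ordinal)) ≤ (p x₀).1 := hn.1.1
        have hnm : n ≤ m := by
          rw [hm] at h1
          exact_mod_cast h1
        exact hKkill n (Set.mem_iInter₂.1 hn.2 n (Finset.mem_range.2 (Nat.lt_succ_of_le hnm)))
    · -- Case 2: every coordinate of `p` is at least `ω`.
      push_neg at hsmall
      have key : ∃ (δ : Ordinal) (x₀ x₁ : {x : Node // x.len = omega1 ∧ x.Extends r}),
          Ordinal.omega0 ≤ δ ∧ (∀ γ < δ, x₀.1.val γ = x₁.1.val γ) ∧
          x₀.1.val δ ≠ x₁.1.val δ ∧ (p x₀).1 = δ ∧ (p x₁).1 = δ := by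
        by_contra hpair
        push_neg at hpair
        set F : ∀ δ : Ordinal, (∀ γ, γ < δ → Bool) → Bool := fun δ g =>
          if δ < Ordinal.omega0 then r.val δ
          else if (∀ x : {x : Node // x.len = omega1 ∧ x.Extends r},
              (∀ γ (hγ : γ < δ), x.1.val γ = g γ hγ) → x.1.val δ = true →
              δ + 1 ≤ (p x).1)
            then true else false with hFdef
        set f : Ordinal → Bool := Ordinal.lt_wf.fix F with hfdef
        have hfeq : ∀ δ, f δ = F δ fun γ _ => f γ := fun δ => WellFounded.fix_eq _ _ δ
        have hfr : ∀ γ, γ < Ordinal.omega0 → f γ = r.val γ := by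
          intro γ hγ
          rw [hfeq γ]
          simp only [hFdef]
          rw [if_pos hγ]
        have hQ : ∀ δ : Ordinal, ∀ x : {x : Node // x.len = omega1 ∧ x.Extends r},
            (∀ γ, γ < δ → x.1.val γ = f γ) → δ ≤ (p x).1 := by
          intro δ
          induction δ using Ordinal.induction with
          | h δ IH =>
            intro x hagree
            by_contra hlt
            push_neg at hlt
            have hγδ : (p x).1 < δ := hlt
            have hωγ : Ordinal.omega0 ≤ (p x).1 := hsmall x
            have hxγ : x.1.val (p x).1 = f (p x).1 := hagree _ hγδ
            have hGood := hfeq (p x).1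
            simp only [hFdef] at hGood
            rw [if_neg (not_lt.2 hωγ)] at hGood
            by_cases hG : ∀ z : {x : Node // x.len = omega1 ∧ x.Extends r},
                (∀ γ (hγ : γ < (p x).1), z.1.val γ = f γ) → z.1.val (p x).1 = true →
                (p x).1 + 1 ≤ (p z).1
            · rw [if_pos hG] at hGood
              have := hG x (fun γ hγ => hagree γ (hγ.trans hγδ)) (by rw [hxγ, hGood])
              exact absurd (add_one_le_iff'.1 this) (lt_irrefl _)
            · rw [if_neg hG] at hGood
              push_neg at hG
              obtain ⟨z, hz1, hz2, hz3⟩ := hG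
              have hzz : (p z).1 = (p x).1 :=
                le_antisymm (lt_add_one_iff'.1 hz3) (IH _ hγδ z hz1)
              exact hpair (p x).1 z x hωγ
                (fun γ hγ => (hz1 γ hγ).trans (hagree γ (hγ.trans hγδ)).symm)
                (by rw [hz2, hxγ, hGood]; simp) hzz rfl
        have hxhatmem := mkBranch_spec r hr f hfr
        set xhat : {x : Node // x.len = omega1 ∧ x.Extends r} := ⟨mkBranch f, hxhatmem⟩
          with hxhat
        have hcon := hQ ((p xhat).1 + 1) xhat
          (fun γ hγ => mkBranch_val f ((lt_add_one_iff'.1 hγ).trans_lt (p xhat).2))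
        exact absurd (add_one_le_iff'.1 hcon) (lt_irrefl _)
      obtain ⟨δ, x₀, x₁, hωδ, hagree, hne, h0, h1⟩ := key
      have hδ : δ < omega1 := h0 ▸ (p x₀).2
      refine ⟨{q | (q x₀).1 ∈ hatA (branchSeq a x₀.1) δ} ∩
          {q | (q x₁).1 ∈ hatA (branchSeq a x₁.1) δ}, ?_, ?_, ?_⟩
      · exact (isOpen_hat_side a x₀ hδ).inter (isOpen_hat_side a x₁ hδ)
      · constructor
        · show (p x₀).1 ∈ hatA (branchSeq a x₀.1) δ
          rw [h0]; exact mem_hatA_self _ _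
        · show (p x₁).1 ∈ hatA (branchSeq a x₁.1) δ
          rw [h1]; exact mem_hatA_self _ _
      · intro n hn
        exact (twin_kill a hT x₀.1 x₁.1 x₀.2.1 x₁.2.1 δ hδ hagree hne n
          ((Ordinal.nat_lt_omega0 n).trans_le hωδ) hn.1 hn.2).elim
  refine ⟨main, ?_⟩
  intro hCC
  have hx : {x : Node // x.len = omega1 ∧ x.Extends r} :=
    ⟨mkBranch r.val, mkBranch_spec r hr r.val (fun _ _ => rfl)⟩
  have hinj : Function.Injective
      (fun n : ℕ => (fun _ => (⟨(n : Ordinal), natLtOmega1 n⟩ : {y : Ordinal // y < omega1}) :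
        (x : {x : Node // x.len = omega1 ∧ x.Extends r}) → {y : Ordinal // y < omega1})) := by
    intro m n hmn
    have h1 : ((m : Ordinal)) = (n : Ordinal) := congrArg Subtype.val (congrFun hmn hx)
    exact_mod_cast h1
  obtain ⟨pt, hpt⟩ := hCC _ (Set.countable_range _) (Set.infinite_range_of_injective hinj)
  obtain ⟨U, hU, hpU, hUkill⟩ := main pt
  obtain ⟨q, hqD, hqne, hqU⟩ := hpt U hU hpU
  obtain ⟨n, rfl⟩ := hqD
  exact hqne (hUkill n hqU)

end
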